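/- Let $d=1$ (or any $d\ge1$). With charges $q_0,\dots,q_{N-1}$ and any nearest-neighbor path $S$, define $x_\varepsilon^p$ as a site of parity $p$ maximizing $\varepsilon Q_N^x$, and the charge distance to optimality $D_N = \sum_{\varepsilon\in\{+,-\}}\sum_{p\in\{\mathrm{odd},\mathrm{even}\}} Q_\varepsilon^p (Q_\varepsilon^p - \varepsilon Q_N^{x_\varepsilon^p})$. If $\varepsilon,\varepsilon'\in\{+,-\}$ are such that $\|x_\varepsilon^{\mathrm{odd}} - x_{\varepsilon'}^{\mathrm{even}}\| \ne 1$, then $D_N \ge \sum_{1\le i<N,\ i\ \mathrm{odd}} \min(Q_\varepsilon^{\mathrm{odd}} q_i^\varepsilon,\ Q_{\varepsilon'}^{\mathrm{even}} q_{i-1}^{\varepsilon'})$. -/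

import Mathlib

open MeasureTheory Filter Finset Real
open scoped ENNReal

noncomputable section

/-- Total charge at site `x` for charges `q` and path `S`, among monomers `0 ≤ i < N`. -/
def Qof {d : ℕ} (N : ℕ) (q : ℕ → ℝ) (S : ℕ → Fin d → ℤ) (x : Fin d → ℤ) : ℝ :=
  ∑ i ∈ Finset.range N, if S i = x then q i else 0

/-- Energy `H_N = ∑_x (Q_N^x)²` (the sum over all of `ℤ^d` reduces to visited sites). -/
def Hof {d : ℕ} (N : ℕ) (q : ℕ → ℝ) (S : ℕ → Fin d → ℤ) : ℝ :=
  ∑ x ∈ (Finset.range N).image S, (Qof N q S x) ^ 2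

/-- `v` is a unit step in `ℤ^d`. -/
def IsUnitStep {d : ℕ} (v : Fin d → ℤ) : Prop := (∑ j, |v j|) = 1

/-- `S` is a nearest-neighbor path in `ℤ^d` starting at `0`. -/
def IsNNPath {d : ℕ} (S : ℕ → Fin d → ℤ) : Prop :=
  S 0 = 0 ∧ ∀ i, IsUnitStep (fun j => S (i + 1) j - S i j)

/-- Positive (`s = true`) or negative (`s = false`) part of a real charge. -/
def Qsgn (s : Bool) (r : ℝ) : ℝ := if s then max r 0 else max (-r) 0

/-- `Q_ε^p`: total charge of sign `s` at indices of parity `p`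
(`p = true` means odd). -/
def Qpar (N : ℕ) (q : ℕ → ℝ) (p : Bool) (s : Bool) : ℝ :=
  ∑ i ∈ Finset.range N, if i % 2 = (if p then 1 else 0) then Qsgn s (q i) else 0

/-- The sign `+1` / `-1` associated with `s : Bool`. -/
def sgnVal (s : Bool) : ℝ := if s then 1 else -1

/-- The parity (as an integer `1` = odd, `0` = even) associated with `p`. -/
def parInt (p : Bool) : ℤ := if p then 1 else 0

/-- The charge distance to optimality
`D_N = ∑_{ε,p} Q_ε^p (Q_ε^p - ε Q_N^{x_ε^p})`, where `x s p` is a site of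
parity `p` maximizing `ε ↦ ε Q_N^x`. -/
def Ddist {d : ℕ} (N : ℕ) (q : ℕ → ℝ) (S : ℕ → Fin d → ℤ)
    (x : Bool → Bool → (Fin d → ℤ)) : ℝ :=
  ∑ s : Bool, ∑ p : Bool,
    Qpar N q p s * (Qpar N q p s - sgnVal s * Qof N q S (x s p))

lemma Qsgn_nonneg (s : Bool) (r : ℝ) : 0 ≤ Qsgn s r := by
  cases s <;> simp [Qsgn]

lemma sgn_mul_le (s : Bool) (r : ℝ) : sgnVal s * r ≤ Qsgn s r := by
  cases s <;> simp [Qsgn, sgnVal]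

lemma Qpar_nonneg (N : ℕ) (q : ℕ → ℝ) (p s : Bool) : 0 ≤ Qpar N q p s := by
  apply Finset.sum_nonneg
  intro i _
  by_cases h2 : i % 2 = (if p then 1 else 0) <;>
    simp [h2, Qsgn_nonneg]

lemma unit_step_parity {d : ℕ} (v : Fin d → ℤ) (h : IsUnitStep v) :
    (∑ j, v j) % 2 = 1 := by
  have hd2 : (2:ℤ) ∣ (∑ j, |v j|) - (∑ j, v j) := by
    rw [← Finset.sum_sub_distrib]
    apply Finset.dvd_sum
    intro j _
    rcases abs_choice (v j) with h1 | h1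
    · simp [h1]
    · rw [h1]; exact ⟨-v j, by ring⟩
  have h1 : (∑ j, |v j|) = 1 := h
  omega

lemma path_parity {d : ℕ} (S : ℕ → Fin d → ℤ) (hS : IsNNPath S) (i : ℕ) :
    (∑ j, S i j) % 2 = (i : ℤ) % 2 := by
  induction i with
  | zero => simp [show S 0 = 0 from hS.1]
  | succ n ih =>
    have hstep := unit_step_parity _ (hS.2 n)
    have hsum : (∑ j, S (n+1) j) - (∑ j, S n j) = ∑ j, (S (n+1) j - S n j) :=
      (Finset.sum_sub_distrib _ _).symm
    push_cast
    omega

lemma parity_cond (p : Bool) (i : ℕ) (h : (i : ℤ) % 2 = parInt p) :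
    i % 2 = (if p then 1 else 0) := by
  cases p <;> simp [parInt] at h ⊢ <;> omega

lemma sgn_Qof_le_Qpar {d : ℕ} (N : ℕ) (q : ℕ → ℝ) (S : ℕ → Fin d → ℤ)
    (hS : IsNNPath S) (p s : Bool) (y : Fin d → ℤ)
    (hy : (∑ j, y j) % 2 = parInt p) :
    sgnVal s * Qof N q S y ≤ Qpar N q p s := by
  rw [Qof, Finset.mul_sum, Qpar]
  apply Finset.sum_le_sum
  intro i _
  by_cases h : S i = y
  · have hip : i % 2 = (if p then 1 else 0) :=
      parity_cond p i (by rw [← path_parity S hS i, h, hy])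
    simp only [h, if_pos, hip, if_true]
    exact sgn_mul_le s (q i)
  · simp only [h, if_false, mul_zero]
    by_cases h2 : i % 2 = (if p then 1 else 0) <;>
      simp [h2, Qsgn_nonneg]

lemma gap_ge {d : ℕ} (N : ℕ) (q : ℕ → ℝ) (S : ℕ → Fin d → ℤ)
    (hS : IsNNPath S) (p s : Bool) (y : Fin d → ℤ)
    (hy : (∑ j, y j) % 2 = parInt p) :
    ∑ i ∈ (Finset.range N).filter
        (fun i => i % 2 = (if p then 1 else 0) ∧ S i ≠ y), Qsgn s (q i)
      ≤ Qpar N q p s - sgnVal s * Qof N q S y := by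
  rw [Qpar, Qof, Finset.mul_sum, ← Finset.sum_sub_distrib, Finset.sum_filter]
  apply Finset.sum_le_sum
  intro i _
  by_cases h : S i = y
  · have hip : i % 2 = (if p then 1 else 0) :=
      parity_cond p i (by rw [← path_parity S hS i, h, hy])
    simp only [h, hip, if_true, ne_eq, not_true_eq_false, and_false, if_false]
    have := sgn_mul_le s (q i)
    linarith
  · by_cases h2 : i % 2 = (if p then 1 else 0) <;>
      simp [h, h2]

lemma gap_odd {d : ℕ} (N : ℕ) (q : ℕ → ℝ) (S : ℕ → Fin d → ℤ)
    (hS : IsNNPath S) (s : Bool) (y : Fin d → ℤ)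
    (hy : (∑ j, y j) % 2 = 1) :
    ∑ i ∈ (Finset.range N).filter (fun i => i % 2 = 1 ∧ S i ≠ y), Qsgn s (q i)
      ≤ Qpar N q true s - sgnVal s * Qof N q S y := by
  simpa using gap_ge N q S hS true s y (by simpa [parInt] using hy)

lemma gap_even {d : ℕ} (N : ℕ) (q : ℕ → ℝ) (S : ℕ → Fin d → ℤ)
    (hS : IsNNPath S) (s : Bool) (y : Fin d → ℤ)
    (hy : (∑ j, y j) % 2 = 0) :
    ∑ i ∈ (Finset.range N).filter (fun i => i % 2 = 0 ∧ S i ≠ y), Qsgn s (q i)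
      ≤ Qpar N q false s - sgnVal s * Qof N q S y := by
  simpa using gap_ge N q S hS false s y (by simpa [parInt] using hy)

lemma if_nonneg' (c : Prop) [Decidable c] (r : ℝ) (hr : 0 ≤ r) :
    0 ≤ if c then r else 0 := by
  split
  exacts [hr, le_rfl]

/-- if the optimal odd site for sign `s` and the optimal even
site for sign `s'` are not adjacent, then
`D_N ≥ ∑_{1 ≤ i < N odd} min(Q_s^odd q_i^s, Q_{s'}^even q_{i-1}^{s'})`. -/
theorem Ddist_lower_bound {d : ℕ} (hd : 1 ≤ d) (N : ℕ) (q : ℕ → ℝ)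
    (S : ℕ → Fin d → ℤ) (hS : IsNNPath S)
    (x : Bool → Bool → (Fin d → ℤ))
    (hpar : ∀ s p, (∑ j, x s p j) % 2 = parInt p)
    (hmax : ∀ s p (y : Fin d → ℤ), (∑ j, y j) % 2 = parInt p →
      sgnVal s * Qof N q S y ≤ sgnVal s * Qof N q S (x s p))
    (s s' : Bool) (hadj : (∑ j, |x s true j - x s' false j|) ≠ 1) :
    ∑ i ∈ (Finset.range N).filter (fun i => i % 2 = 1),
        min (Qpar N q true s * Qsgn s (q i)) (Qpar N q false s' * Qsgn s' (q (i - 1)))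
      ≤ Ddist N q S x := by
  classical
  have hAnn : 0 ≤ Qpar N q true s := Qpar_nonneg N q true s
  have hBnn : 0 ≤ Qpar N q false s' := Qpar_nonneg N q false s'
  have hgapo := gap_odd N q S hS s (x s true) (by simpa [parInt] using hpar s true)
  have hgape := gap_even N q S hS s' (x s' false) (by simpa [parInt] using hpar s' false)
  have nn : ∀ σ p : Bool,
      0 ≤ Qpar N q p σ * (Qpar N q p σ - sgnVal σ * Qof N q S (x σ p)) := by
    intro σ p
    have h1 := sgn_Qof_le_Qpar N q S hS p σ (x σ p) (hpar σ p)
    have h2 := Qpar_nonneg N q p σ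
    nlinarith
  have hD : Qpar N q true s * (Qpar N q true s - sgnVal s * Qof N q S (x s true))
      + Qpar N q false s' * (Qpar N q false s' - sgnVal s' * Qof N q S (x s' false))
        ≤ Ddist N q S x := by
    have n1 := nn true true; have n2 := nn true false
    have n3 := nn false true; have n4 := nn false false
    cases s <;> cases s' <;>
      simp only [Ddist, Fintype.sum_bool] <;> linarith
  refine le_trans ?_ hD
  have hT1 := mul_le_mul_of_nonneg_left hgapo hAnn
  have hT2 := mul_le_mul_of_nonneg_left hgape hBnn
  refine le_trans ?_ (add_le_add hT1 hT2)
  rw [Finset.mul_sum, Finset.mul_sum]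
  -- per-element bound
  have key : ∀ i ∈ (Finset.range N).filter (fun i => i % 2 = 1),
      min (Qpar N q true s * Qsgn s (q i)) (Qpar N q false s' * Qsgn s' (q (i - 1)))
        ≤ (if S i ≠ x s true then Qpar N q true s * Qsgn s (q i) else 0)
          + (if S (i-1) ≠ x s' false then Qpar N q false s' * Qsgn s' (q (i - 1)) else 0) := by
    intro i hi
    simp only [Finset.mem_filter, Finset.mem_range] at hi
    have hi1 : 1 ≤ i := by omega
    have hnotboth : ¬ (S i = x s true ∧ S (i-1) = x s' false) := by
      rintro ⟨h1, h2⟩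
      apply hadj
      have hu := hS.2 (i-1)
      have hi2 : i - 1 + 1 = i := by omega
      rw [hi2] at hu
      have hone : (∑ j, |S i j - S (i-1) j|) = 1 := hu
      rw [h1, h2] at hone
      exact hone
    have hnn1 : 0 ≤ if S i ≠ x s true then Qpar N q true s * Qsgn s (q i) else 0 :=
      if_nonneg' _ _ (mul_nonneg hAnn (Qsgn_nonneg _ _))
    have hnn2 : 0 ≤ if S (i-1) ≠ x s' false then
        Qpar N q false s' * Qsgn s' (q (i - 1)) else 0 :=
      if_nonneg' _ _ (mul_nonneg hBnn (Qsgn_nonneg _ _))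
    rcases not_and_or.mp hnotboth with h | h
    · rw [if_pos h]
      have := min_le_left (Qpar N q true s * Qsgn s (q i))
        (Qpar N q false s' * Qsgn s' (q (i - 1)))
      linarith
    · rw [if_pos h]
      have := min_le_right (Qpar N q true s * Qsgn s (q i))
        (Qpar N q false s' * Qsgn s' (q (i - 1)))
      linarith
  refine le_trans (Finset.sum_le_sum key) ?_
  rw [Finset.sum_add_distrib]
  have hsum1 : ∑ i ∈ (Finset.range N).filter (fun i => i % 2 = 1),
      (if S i ≠ x s true then Qpar N q true s * Qsgn s (q i) else 0)
      = ∑ i ∈ (Finset.range N).filter (fun i => i % 2 = 1 ∧ S i ≠ x s true),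
          Qpar N q true s * Qsgn s (q i) := by
    rw [← Finset.sum_filter, Finset.filter_filter]
  have hsum2 : ∑ i ∈ (Finset.range N).filter (fun i => i % 2 = 1),
      (if S (i-1) ≠ x s' false then Qpar N q false s' * Qsgn s' (q (i - 1)) else 0)
      ≤ ∑ j ∈ (Finset.range N).filter (fun j => j % 2 = 0 ∧ S j ≠ x s' false),
          Qpar N q false s' * Qsgn s' (q j) := by
    rw [← Finset.sum_filter, Finset.filter_filter]
    set G := (Finset.range N).filter (fun i => i % 2 = 1 ∧ S (i-1) ≠ x s' false) with hG
    have hinj : ∀ a ∈ G, ∀ b ∈ G, a - 1 = b - 1 → a = b := by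
      intro a ha b hb hab
      simp only [hG, Finset.mem_filter, Finset.mem_range] at ha hb
      omega
    have himg : ∑ i ∈ G, Qpar N q false s' * Qsgn s' (q (i - 1))
        = ∑ j ∈ G.image (fun i => i - 1), Qpar N q false s' * Qsgn s' (q j) := by
      rw [Finset.sum_image hinj]
    rw [himg]
    apply Finset.sum_le_sum_of_subset_of_nonneg
    · intro j hj
      simp only [hG, Finset.mem_image, Finset.mem_filter, Finset.mem_range] at hj ⊢
      obtain ⟨i, ⟨hiN, hodd, hne⟩, rfl⟩ := hj
      exact ⟨by omega, by omega, hne⟩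
    · intro j _ _
      exact mul_nonneg hBnn (Qsgn_nonneg _ _)
  rw [hsum1]
  exact add_le_add le_rfl hsum2

end
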